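/- Let O₁, …, O_l be rank-1 orthogonal projectors on a finite-dimensional complex Hilbert space ℂ^d, and let cos φ = max_{i≠j} ‖O_i O_j‖ (operator norm). Then ‖O₁ + ⋯ + O_l‖ ≤ 1 + (l−1)·cos φ. -/

import Mathlib

open scoped InnerProductSpace

lemma rank_one_structure {d : ℕ} (O : EuclideanSpace ℂ (Fin d) →L[ℂ] EuclideanSpace ℂ (Fin d))
    (hidem : O * O = O) (hsa : ContinuousLinearMap.adjoint O = O)
    (hrank : Module.finrank ℂ (LinearMap.range ((O : EuclideanSpace ℂ (Fin d) →ₗ[ℂ] EuclideanSpace ℂ (Fin d)))) = 1) :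
    ∃ v : EuclideanSpace ℂ (Fin d), ‖v‖ = 1 ∧ ∀ x, O x = ⟪v, x⟫_ℂ • v := by
  set R := LinearMap.range ((O : EuclideanSpace ℂ (Fin d) →ₗ[ℂ] EuclideanSpace ℂ (Fin d))) with hR
  have hRbot : R ≠ ⊥ := by
    intro h; rw [h] at hrank; simp at hrank
  obtain ⟨w, hwR, hw0⟩ := Submodule.ne_bot_iff R |>.mp hRbot
  have hwn : ‖w‖ ≠ 0 := norm_ne_zero_iff.mpr hw0
  set v : EuclideanSpace ℂ (Fin d) := (‖w‖⁻¹ : ℂ) • w with hv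
  have hvnorm : ‖v‖ = 1 := by
    rw [hv, norm_smul]
    simp [hwn]
  have hvR : v ∈ R := R.smul_mem _ hwR
  have hfix : ∀ y ∈ R, O y = y := by
    intro y hy
    obtain ⟨u, hu⟩ := hy
    have : O (O u) = O u := by
      conv_lhs => rw [← ContinuousLinearMap.mul_apply, hidem]
    have hu' : O u = y := hu
    rw [← hu']
    exact this
  have hv0 : v ≠ 0 := by
    intro h; rw [h] at hvnorm; simp at hvnorm
  have hspan : Submodule.span ℂ {v} = R := by
    apply Submodule.eq_of_le_of_finrank_le
    · rwa [Submodule.span_singleton_le_iff_mem]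
    · rw [hrank, finrank_span_singleton hv0]
  refine ⟨v, hvnorm, fun x => ?_⟩
  have hmem : O x ∈ R := LinearMap.mem_range_self _ x
  rw [← hspan] at hmem
  obtain ⟨a, ha⟩ := Submodule.mem_span_singleton.mp hmem
  have hinner : ⟪v, O x⟫_ℂ = ⟪v, x⟫_ℂ := by
    calc ⟪v, O x⟫_ℂ = ⟪ContinuousLinearMap.adjoint O v, x⟫_ℂ := by
          rw [ContinuousLinearMap.adjoint_inner_left]
      _ = ⟪v, x⟫_ℂ := by rw [hsa, hfix v hvR]
  have hvv : ⟪v, v⟫_ℂ = 1 := by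
    rw [inner_self_eq_norm_sq_to_K, hvnorm]; norm_num
  rw [← ha] at hinner ⊢
  rw [inner_smul_right, hvv, mul_one] at hinner
  rw [hinner]

set_option maxHeartbeats 1000000 in
/-- For rank-1 orthogonal projectors `O₁, …, O_l` on `ℂ^d`, with
`cos φ = max_{i ≠ j} ‖O_i O_j‖`, one has `‖O₁ + ⋯ + O_l‖ ≤ 1 + (l-1) cos φ`. -/
theorem sum_rank_one_projectors_norm_le
    {d l : ℕ} (hl : 2 ≤ l)
    (O : Fin l → EuclideanSpace ℂ (Fin d) →L[ℂ] EuclideanSpace ℂ (Fin d))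
    (hidem : ∀ i, O i * O i = O i)
    (hsa : ∀ i, ContinuousLinearMap.adjoint (O i) = O i)
    (hrank : ∀ i, Module.finrank ℂ (LinearMap.range ((O i) : EuclideanSpace ℂ (Fin d) →ₗ[ℂ] EuclideanSpace ℂ (Fin d))) = 1)
    (cosφ : ℝ)
    (hcos : cosφ = (Finset.univ.offDiag).sup'
      (⟨(⟨0, by omega⟩, ⟨1, by omega⟩), by simp [Finset.mem_offDiag, Fin.ext_iff]⟩)
      (fun p : Fin l × Fin l => ‖O p.1 * O p.2‖)) :
    ‖∑ i, O i‖ ≤ 1 + ((l : ℝ) - 1) * cosφ := by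
  classical
  choose v hv1 hv2 using fun i => rank_one_structure (O i) (hidem i) (hsa i) (hrank i)
  have hvv : ∀ i, ⟪v i, v i⟫_ℂ = 1 := by
    intro i
    rw [inner_self_eq_norm_sq_to_K, hv1]; norm_num
  -- norm of product
  have hprod : ∀ i j, i ≠ j → ‖⟪v i, v j⟫_ℂ‖ ≤ cosφ := by
    intro i j hne
    have h1 : (O i * O j) (v j) = ⟪v i, v j⟫_ℂ • v i := by
      rw [ContinuousLinearMap.mul_apply, hv2 j, hvv j, one_smul, hv2 i]
    have h2 : ‖(O i * O j) (v j)‖ ≤ ‖O i * O j‖ := by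
      calc ‖(O i * O j) (v j)‖ ≤ ‖O i * O j‖ * ‖v j‖ := ContinuousLinearMap.le_opNorm _ _
        _ = ‖O i * O j‖ := by rw [hv1 j, mul_one]
    have h3 : ‖O i * O j‖ ≤ cosφ := by
      rw [hcos]
      have hmem : (i, j) ∈ (Finset.univ : Finset (Fin l)).offDiag := by
        simp [Finset.mem_offDiag, hne]
      have hle := Finset.le_sup' (s := (Finset.univ : Finset (Fin l)).offDiag)
        (fun p : Fin l × Fin l => ‖O p.1 * O p.2‖) hmem
      exact hle
    rw [h1, norm_smul, hv1 i, mul_one] at h2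
    exact h2.trans h3
  have hcos0 : 0 ≤ cosφ := by
    have := hprod ⟨0, by omega⟩ ⟨1, by omega⟩ (by simp [Fin.ext_iff])
    exact le_trans (norm_nonneg _) this
  have hC0 : (0:ℝ) ≤ 1 + ((l : ℝ) - 1) * cosφ := by
    have : (1:ℝ) ≤ (l:ℝ) := by exact_mod_cast Nat.one_le_of_lt hl
    nlinarith
  apply ContinuousLinearMap.opNorm_le_bound _ hC0
  intro x
  set c : Fin l → ℂ := fun i => ⟪v i, x⟫_ℂ with hc
  set t : Fin l → ℝ := fun i => ‖c i‖^2 with ht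
  set S := ∑ i, t i with hSdef
  have hS0 : 0 ≤ S := Finset.sum_nonneg fun i _ => sq_nonneg _
  have hAx : (∑ i, O i) x = ∑ i, c i • v i := by
    rw [ContinuousLinearMap.sum_apply]
    exact Finset.sum_congr rfl fun i _ => hv2 i x
  -- Claim 2 : S ≤ ‖x‖ * ‖Ax‖
  have hSle : S ≤ ‖x‖ * ‖(∑ i, O i) x‖ := by
    have hinner : ⟪x, (∑ i, O i) x⟫_ℂ = (S : ℂ) := by
      rw [hAx, inner_sum]
      have key : ∀ i, ⟪x, c i • v i⟫_ℂ = ((t i : ℝ) : ℂ) := by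
        intro i
        have h5 : ⟪x, v i⟫_ℂ = starRingEnd ℂ (c i) := (inner_conj_symm x (v i)).symm
        rw [inner_smul_right, h5, Complex.mul_conj]
        norm_cast
        simp [ht, Complex.normSq_eq_norm_sq]
      rw [Finset.sum_congr rfl fun i _ => key i, hSdef]
      push_cast
      rfl
    have : S = Complex.re ⟪x, (∑ i, O i) x⟫_ℂ := by rw [hinner]; simp
    rw [this]
    calc Complex.re ⟪x, (∑ i, O i) x⟫_ℂ ≤ ‖⟪x, (∑ i, O i) x⟫_ℂ‖ := Complex.re_le_norm _
      _ ≤ ‖x‖ * ‖(∑ i, O i) x‖ := norm_inner_le_norm _ _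
  -- Claim 1 : ‖Ax‖² ≤ C * S
  have hnorm2 : ‖(∑ i, O i) x‖^2 ≤ (1 + ((l : ℝ) - 1) * cosφ) * S := by
    have expand0 : ⟪(∑ i, O i) x, (∑ i, O i) x⟫_ℂ
        = ∑ i, ∑ j, starRingEnd ℂ (c i) * c j * ⟪v i, v j⟫_ℂ := by
      rw [hAx, sum_inner]
      refine Finset.sum_congr rfl fun i _ => ?_
      rw [inner_sum]
      refine Finset.sum_congr rfl fun j _ => ?_
      rw [inner_smul_left, inner_smul_right]; ring
    have expand : (‖(∑ i, O i) x‖:ℝ)^2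
        = Complex.re (∑ i, ∑ j, starRingEnd ℂ (c i) * c j * ⟪v i, v j⟫_ℂ) := by
      rw [← expand0, ← inner_self_eq_norm_sq (𝕜 := ℂ)]
      rfl
    rw [expand, Complex.re_sum]
    have step1 : ∀ i ∈ Finset.univ, Complex.re (∑ j, starRingEnd ℂ (c i) * c j * ⟪v i, v j⟫_ℂ)
        ≤ ∑ j, (if i = j then 1 else cosφ) * ((t i + t j)/2) := by
      intro i _
      rw [Complex.re_sum]
      refine Finset.sum_le_sum fun j _ => ?_
      have h1 : Complex.re (starRingEnd ℂ (c i) * c j * ⟪v i, v j⟫_ℂ)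
          ≤ ‖c i‖ * ‖c j‖ * ‖⟪v i, v j⟫_ℂ‖ := by
        calc Complex.re _ ≤ ‖starRingEnd ℂ (c i) * c j * ⟪v i, v j⟫_ℂ‖ := Complex.re_le_norm _
          _ = ‖c i‖ * ‖c j‖ * ‖⟪v i, v j⟫_ℂ‖ := by simp [norm_mul]
      have h2 : ‖⟪v i, v j⟫_ℂ‖ ≤ (if i = j then 1 else cosφ) := by
        split
        · next h => subst h; rw [hvv]; simp
        · next h => exact hprod i j h
      have h3 : ‖c i‖ * ‖c j‖ ≤ (t i + t j)/2 := by
        have := sq_nonneg (‖c i‖ - ‖c j‖)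
        simp only [ht]; nlinarith
      have hfac : (0:ℝ) ≤ (if i = j then 1 else cosφ) := by split <;> simp [hcos0]
      calc Complex.re (starRingEnd ℂ (c i) * c j * ⟪v i, v j⟫_ℂ)
          ≤ ‖c i‖ * ‖c j‖ * ‖⟪v i, v j⟫_ℂ‖ := h1
        _ ≤ ‖c i‖ * ‖c j‖ * (if i = j then 1 else cosφ) := by
            exact mul_le_mul_of_nonneg_left h2 (by positivity)
        _ ≤ ((t i + t j)/2) * (if i = j then 1 else cosφ) := by
            exact mul_le_mul_of_nonneg_right h3 hfac
        _ = (if i = j then 1 else cosφ) * ((t i + t j)/2) := by ring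
    calc (∑ i, Complex.re (∑ j, starRingEnd ℂ (c i) * c j * ⟪v i, v j⟫_ℂ))
        ≤ ∑ i, ∑ j, (if i = j then 1 else cosφ) * ((t i + t j)/2) :=
          Finset.sum_le_sum step1
      _ = (1 + ((l : ℝ) - 1) * cosφ) * S := by
          have key : ∀ i j : Fin l, (if i = j then (1:ℝ) else cosφ) * ((t i + t j)/2)
              = cosφ * ((t i + t j)/2) + (if i = j then (1 - cosφ) * t i else 0) := by
            intro i j
            by_cases h : i = j
            · subst h; simp; ring
            · simp [h]
          simp_rw [key]
          rw [Finset.sum_congr rfl fun i _ => Finset.sum_add_distrib]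
          rw [Finset.sum_add_distrib]
          have e1 : (∑ i : Fin l, ∑ j : Fin l, cosφ * ((t i + t j)/2))
              = cosφ * ((l:ℝ) * S) := by
            simp_rw [← Finset.mul_sum]
            congr 1
            have : ∀ i : Fin l, ∑ j : Fin l, (t i + t j)/2 = ((l:ℝ) * t i + S)/2 := by
              intro i
              rw [← Finset.sum_div, Finset.sum_add_distrib, Finset.sum_const,
                Finset.card_univ, Fintype.card_fin, nsmul_eq_mul, ← hSdef]
            rw [Finset.sum_congr rfl fun i _ => this i, ← Finset.sum_div,
              Finset.sum_add_distrib, ← Finset.mul_sum, Finset.sum_const,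
              Finset.card_univ, Fintype.card_fin, nsmul_eq_mul, ← hSdef]
            ring
          have e2 : (∑ i : Fin l, ∑ j : Fin l, (if i = j then (1 - cosφ) * t i else 0))
              = (1 - cosφ) * S := by
            have : ∀ i : Fin l, (∑ j : Fin l, (if i = j then (1 - cosφ) * t i else 0))
                = (1 - cosφ) * t i := by
              intro i
              rw [Finset.sum_ite_eq]
              simp
            rw [Finset.sum_congr rfl fun i _ => this i, ← Finset.mul_sum, ← hSdef]
          rw [e1, e2]
          ring
  -- conclude
  rcases eq_or_lt_of_le (norm_nonneg ((∑ i, O i) x)) with h0 | h0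
  · rw [← h0]; positivity
  · have h4 : ‖(∑ i, O i) x‖^2 ≤ (1 + ((l : ℝ) - 1) * cosφ) * (‖x‖ * ‖(∑ i, O i) x‖) :=
      hnorm2.trans (mul_le_mul_of_nonneg_left hSle hC0)
    nlinarith [h4, h0]
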